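/- Let G be a symmetric positive definite n×n matrix, and let R and R̂ be n×M and n×M̂ matrices of full column ranks M and M̂ respectively, with colsp(R) ⊆ colsp(R̂). Then the matrix P := R̂ (R̂' G R̂)^{-1} R̂' - R (R' G R)^{-1} R' is positive semi-definite. -/

import Mathlib

open Matrix

section Aux

variable {n m : ℕ}

private lemma aux_mulVec_injective (A : Matrix (Fin n) (Fin m) ℝ) (h : A.rank = m) :
    Function.Injective A.mulVecLin := by
  rw [← LinearMap.ker_eq_bot]
  have hd := A.mulVecLin.finrank_range_add_finrank_ker
  rw [show Module.finrank ℝ (Fin m → ℝ) = m from Module.finrank_fin_fun ℝ] at hd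
  rw [Matrix.rank] at h
  have hker : Module.finrank ℝ (LinearMap.ker A.mulVecLin) = 0 := by omega
  exact Submodule.finrank_eq_zero.mp hker

private lemma aux_posDef_conj {G : Matrix (Fin n) (Fin n) ℝ} (hG : G.PosDef)
    (A : Matrix (Fin n) (Fin m) ℝ) (hA : Function.Injective A.mulVecLin) :
    (Aᵀ * G * A).PosDef := by
  refine Matrix.posDef_iff_dotProduct_mulVec.mpr ⟨?_, ?_⟩
  · have := Matrix.isHermitian_conjTranspose_mul_mul A hG.isHermitian
    simpa [Matrix.conjTranspose_eq_transpose_of_trivial] using this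
  · intro x hx
    have hAx : A *ᵥ x ≠ 0 := by
      intro h
      apply hx
      have : A.mulVecLin x = A.mulVecLin 0 := by simpa [Matrix.mulVecLin_apply] using h
      exact hA this
    have h1 := hG.dotProduct_mulVec_pos hAx
    have key : x ⬝ᵥ (Aᵀ * G * A) *ᵥ x = (A *ᵥ x) ⬝ᵥ G *ᵥ (A *ᵥ x) := by
      rw [← Matrix.mulVec_mulVec, ← Matrix.mulVec_mulVec,
        Matrix.dotProduct_mulVec x Aᵀ, Matrix.vecMul_transpose]
    simp only [star_trivial] at h1 ⊢
    rw [key]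
    exact h1

private lemma aux_key {n m k : ℕ} (G : Matrix (Fin n) (Fin n) ℝ)
    (B : Matrix (Fin n) (Fin m) ℝ) (C : Matrix (Fin m) (Fin k) ℝ)
    (hinv : (Bᵀ * G * B)⁻¹ * (Bᵀ * G * B) = 1) :
    B * (Bᵀ * G * B)⁻¹ * Bᵀ * G * (B * C) = B * C := by
  calc B * (Bᵀ * G * B)⁻¹ * Bᵀ * G * (B * C)
      = B * ((Bᵀ * G * B)⁻¹ * (Bᵀ * G * B) * C) := by simp only [Matrix.mul_assoc]
    _ = B * C := by rw [hinv, Matrix.one_mul]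

end Aux

/-- If G is symmetric positive definite, R and R̂ have full column ranks
M and M̂, and colsp(R) ⊆ colsp(R̂), then
P = R̂ (R̂' G R̂)⁻¹ R̂' - R (R' G R)⁻¹ R' is positive semi-definite. -/
theorem projection_difference_posSemidef
    (n M Mhat : ℕ) (G : Matrix (Fin n) (Fin n) ℝ)
    (R : Matrix (Fin n) (Fin M) ℝ) (Rhat : Matrix (Fin n) (Fin Mhat) ℝ)
    (hG : G.PosDef) (hR : R.rank = M) (hRhat : Rhat.rank = Mhat)
    (hcolsp : LinearMap.range R.mulVecLin ≤ LinearMap.range Rhat.mulVecLin) :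
    (Rhat * (Rhatᵀ * G * Rhat)⁻¹ * Rhatᵀ - R * (Rᵀ * G * R)⁻¹ * Rᵀ).PosSemidef := by
  -- invertibility of the Gram matrices
  have hA : (Rᵀ * G * R).PosDef := aux_posDef_conj hG R (aux_mulVec_injective R hR)
  have hAhat : (Rhatᵀ * G * Rhat).PosDef :=
    aux_posDef_conj hG Rhat (aux_mulVec_injective Rhat hRhat)
  have hAinv : (Rᵀ * G * R)⁻¹ * (Rᵀ * G * R) = 1 := Matrix.nonsing_inv_mul _ hA.det_pos.ne'.isUnit
  have hAhinv : (Rhatᵀ * G * Rhat)⁻¹ * (Rhatᵀ * G * Rhat) = 1 :=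
    Matrix.nonsing_inv_mul _ hAhat.det_pos.ne'.isUnit
  -- symmetry facts
  have hGsym : Gᵀ = G := by
    have := hG.isHermitian.eq
    simpa [Matrix.conjTranspose_eq_transpose_of_trivial] using this
  have hAsym : (Rᵀ * G * R)ᵀ = Rᵀ * G * R := by
    have := hA.isHermitian.eq
    simpa [Matrix.conjTranspose_eq_transpose_of_trivial] using this
  have hAhsym : (Rhatᵀ * G * Rhat)ᵀ = Rhatᵀ * G * Rhat := by
    have := hAhat.isHermitian.eq
    simpa [Matrix.conjTranspose_eq_transpose_of_trivial] using this
  have hSsym : (R * (Rᵀ * G * R)⁻¹ * Rᵀ)ᵀ = R * (Rᵀ * G * R)⁻¹ * Rᵀ := by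
    rw [Matrix.transpose_mul, Matrix.transpose_mul, Matrix.transpose_transpose,
      Matrix.transpose_nonsing_inv, hAsym]
    simp [Matrix.mul_assoc]
  have hShsym : (Rhat * (Rhatᵀ * G * Rhat)⁻¹ * Rhatᵀ)ᵀ = Rhat * (Rhatᵀ * G * Rhat)⁻¹ * Rhatᵀ := by
    rw [Matrix.transpose_mul, Matrix.transpose_mul, Matrix.transpose_transpose,
      Matrix.transpose_nonsing_inv, hAhsym]
    simp [Matrix.mul_assoc]
  -- the factorization R = Rhat * C
  have hcol : ∀ j, ∃ c : Fin Mhat → ℝ, Rhat *ᵥ c = fun i => R i j := by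
    intro j
    have hmem : (fun i => R i j) ∈ LinearMap.range R.mulVecLin :=
      ⟨Pi.single j 1, by ext i; simp [Matrix.mulVecLin_apply]⟩
    obtain ⟨c, hc⟩ := hcolsp hmem
    exact ⟨c, hc⟩
  choose c hc using hcol
  have hRC : Rhat * Matrix.of (fun i j => c j i) = R := by
    ext i j
    have := congrFun (hc j) i
    simpa [Matrix.mul_apply, Matrix.mulVec, dotProduct] using this
  -- key projector identities
  have hSR : R * (Rᵀ * G * R)⁻¹ * Rᵀ * G * R = R := by
    have := aux_key G R (1 : Matrix (Fin M) (Fin M) ℝ) hAinv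
    simpa using this
  have hShRhat : Rhat * (Rhatᵀ * G * Rhat)⁻¹ * Rhatᵀ * G * Rhat = Rhat := by
    have := aux_key G Rhat (1 : Matrix (Fin Mhat) (Fin Mhat) ℝ) hAhinv
    simpa using this
  have hShR : Rhat * (Rhatᵀ * G * Rhat)⁻¹ * Rhatᵀ * G * R = R := by
    conv_lhs => rw [← hRC]
    rw [aux_key G Rhat _ hAhinv, hRC]
  -- products of the two projectors
  have hSGS : (R * (Rᵀ * G * R)⁻¹ * Rᵀ) * G * (R * (Rᵀ * G * R)⁻¹ * Rᵀ)
      = R * (Rᵀ * G * R)⁻¹ * Rᵀ := by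
    have h := congrArg (fun X => X * ((Rᵀ * G * R)⁻¹ * Rᵀ)) hSR
    simpa [Matrix.mul_assoc] using h
  have hShGSh : (Rhat * (Rhatᵀ * G * Rhat)⁻¹ * Rhatᵀ) * G * (Rhat * (Rhatᵀ * G * Rhat)⁻¹ * Rhatᵀ)
      = Rhat * (Rhatᵀ * G * Rhat)⁻¹ * Rhatᵀ := by
    have h := congrArg (fun X => X * ((Rhatᵀ * G * Rhat)⁻¹ * Rhatᵀ)) hShRhat
    simpa [Matrix.mul_assoc] using h
  have hShGS : (Rhat * (Rhatᵀ * G * Rhat)⁻¹ * Rhatᵀ) * G * (R * (Rᵀ * G * R)⁻¹ * Rᵀ)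
      = R * (Rᵀ * G * R)⁻¹ * Rᵀ := by
    have h := congrArg (fun X => X * ((Rᵀ * G * R)⁻¹ * Rᵀ)) hShR
    simpa [Matrix.mul_assoc] using h
  have hSGSh : (R * (Rᵀ * G * R)⁻¹ * Rᵀ) * G * (Rhat * (Rhatᵀ * G * Rhat)⁻¹ * Rhatᵀ)
      = R * (Rᵀ * G * R)⁻¹ * Rᵀ := by
    have h := congrArg Matrix.transpose hShGS
    rw [Matrix.transpose_mul (Rhat * (Rhatᵀ * G * Rhat)⁻¹ * Rhatᵀ * G) (R * (Rᵀ * G * R)⁻¹ * Rᵀ),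
      Matrix.transpose_mul (Rhat * (Rhatᵀ * G * Rhat)⁻¹ * Rhatᵀ) G,
      hSsym, hShsym, hGsym, ← Matrix.mul_assoc] at h
    exact h
  -- P * G * P = P
  set P := Rhat * (Rhatᵀ * G * Rhat)⁻¹ * Rhatᵀ - R * (Rᵀ * G * R)⁻¹ * Rᵀ with hPdef
  have hPsym : Pᵀ = P := by
    rw [hPdef, Matrix.transpose_sub, hSsym, hShsym]
  have hPGP : P * G * P = P := by
    rw [hPdef, Matrix.sub_mul, Matrix.sub_mul, Matrix.mul_sub, Matrix.mul_sub,
      hSGS, hShGSh, hShGS, hSGSh]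
    abel
  -- conclude
  refine Matrix.posSemidef_iff_dotProduct_mulVec.mpr ⟨?_, ?_⟩
  · show Pᴴ = P
    rw [Matrix.conjTranspose_eq_transpose_of_trivial, hPsym]
  · intro x
    have key : star x ⬝ᵥ P *ᵥ x = star (P *ᵥ x) ⬝ᵥ G *ᵥ (P *ᵥ x) := by
      rw [star_trivial, star_trivial]
      conv_lhs => rw [← hPGP]
      rw [← Matrix.mulVec_mulVec, ← Matrix.mulVec_mulVec,
        Matrix.dotProduct_mulVec x P, ← hPsym, Matrix.vecMul_transpose, hPsym]
    rw [key]
    exact hG.posSemidef.dotProduct_mulVec_nonneg (P *ᵥ x)
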